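/- For every k ≥ 0, every player i, and every σ ∈ Σ_i: σ ∈ NSD^k_i (i.e., σ survives k rounds of iterated deletion of strongly dominated strategies) if and only if there exist a probability structure M appropriate for Γ and a state ω of M such that strat_i(ω) = σ and ω ∈ RAT^k_i(M). Moreover, when σ ∈ NSD^k_i, the structure M can be taken to be finite with every subset of Ω measurable. -/

import Mathlib

open scoped BigOperators

noncomputable section

/-- A probability distribution on a finite type, represented as a weight function. -/
def IsDist {α : Type*} [Fintype α] (p : α → ℝ) : Prop :=
  (∀ a, 0 ≤ p a) ∧ ∑ a, p a = 1

/-- The probability of a set under a weight function. -/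
def probOf {α : Type*} [Fintype α] (p : α → ℝ) (E : Set α) : ℝ :=
  ∑ a, E.indicator p a

/-- A finite normal-form game with `n` players, all utilities in `[0,1]`. -/
structure Game (n : ℕ) where
  S : Fin n → Type
  fintypeS : ∀ i, Fintype (S i)
  decEqS : ∀ i, DecidableEq (S i)
  nonemptyS : ∀ i, Nonempty (S i)
  u : (i : Fin n) → ((j : Fin n) → S j) → ℝ
  u_mem : ∀ i σ, u i σ ∈ Set.Icc (0 : ℝ) 1

attribute [instance] Game.fintypeS Game.decEqS Game.nonemptyS

namespace Game

variable {n : ℕ}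

abbrev Prof (G : Game n) : Type := (j : Fin n) → G.S j

abbrev OppProf (G : Game n) (i : Fin n) : Type := (j : {j : Fin n // j ≠ i}) → G.S j.val

def stratOpp (G : Game n) (i : Fin n) (σ : G.Prof) : G.OppProf i := fun j => σ j.val

def combine (G : Game n) (i : Fin n) (s : G.S i) (τ : G.OppProf i) : G.Prof :=
  fun j => if h : j = i then cast (congrArg G.S h.symm) s else τ ⟨j, h⟩

/-- Expected utility of strategy `s` of player `i` under belief `b` on opponents' profiles. -/
def EU (G : Game n) (i : Fin n) (s : G.S i) (b : G.OppProf i → ℝ) : ℝ :=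
  ∑ τ : G.OppProf i, b τ * G.u i (G.combine i s τ)

/-- `s` is a best response to the belief `b`. -/
def BR (G : Game n) (i : Fin n) (s : G.S i) (b : G.OppProf i → ℝ) : Prop :=
  ∀ s' : G.S i, G.EU i s' b ≤ G.EU i s b

/-- Utility of mixed strategy `m` of player `i` against opponents' profile `τ`. -/
def EUmix (G : Game n) (i : Fin n) (m : G.S i → ℝ) (τ : G.OppProf i) : ℝ :=
  ∑ s : G.S i, m s * G.u i (G.combine i s τ)

/-- `s` is weakly dominated by the mixed strategy `m` with respect to `T`. -/
def WDom (G : Game n) (i : Fin n) (m : G.S i → ℝ) (s : G.S i)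
    (T : Set (G.OppProf i)) : Prop :=
  (∀ τ ∈ T, G.u i (G.combine i s τ) ≤ G.EUmix i m τ) ∧
    ∃ τ ∈ T, G.u i (G.combine i s τ) < G.EUmix i m τ

/-- `s` is strongly dominated by the mixed strategy `m` with respect to `T`. -/
def SDom (G : Game n) (i : Fin n) (m : G.S i → ℝ) (s : G.S i)
    (T : Set (G.OppProf i)) : Prop :=
  ∀ τ ∈ T, G.u i (G.combine i s τ) < G.EUmix i m τ

/-- Strategies of player `i` surviving `k` rounds of iterated deletion of weakly
dominated strategies. -/
def NWD (G : Game n) : ℕ → (i : Fin n) → Set (G.S i)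
  | 0 => fun _ => Set.univ
  | k + 1 => fun i =>
      {s | s ∈ NWD G k i ∧
        ¬∃ m : G.S i → ℝ, IsDist m ∧
          G.WDom i m s {τ : G.OppProf i | ∀ j, τ j ∈ NWD G k j.val}}

/-- Strategies of player `i` surviving `k` rounds of iterated deletion of strongly
dominated strategies. -/
def NSD (G : Game n) : ℕ → (i : Fin n) → Set (G.S i)
  | 0 => fun _ => Set.univ
  | k + 1 => fun i =>
      {s | s ∈ NSD G k i ∧
        ¬∃ m : G.S i → ℝ, IsDist m ∧
          G.SDom i m s {τ : G.OppProf i | ∀ j, τ j ∈ NSD G k j.val}}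

end Game

open MeasureTheory in
/-- A probability structure appropriate for the game `G`. -/
structure PStruct {n : ℕ} (G : Game n) where
  Ω : Type
  meas : MeasurableSpace Ω
  strat : Ω → G.Prof
  PR : Fin n → Ω → @Measure Ω meas
  PR_prob : ∀ i ω, @IsProbabilityMeasure Ω meas (PR i ω)
  strat_meas : ∀ (j : Fin n) (s : G.S j), MeasurableSet[meas] {ω | strat ω j = s}
  PR_own_strat : ∀ i ω, PR i ω {ω' | strat ω' i = strat ω i} = 1
  PR_meas : ∀ (i : Fin n) (π : @Measure Ω meas), MeasurableSet[meas] {ω | PR i ω = π}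
  PR_own_PR : ∀ i ω, PR i ω {ω' | PR i ω' = PR i ω} = 1

namespace PStruct

variable {n : ℕ} {G : Game n}

/-- The belief on opponents' strategy profiles induced by `PR i ω`. -/
def belief (M : PStruct G) (i : Fin n) (ω : M.Ω) : G.OppProf i → ℝ :=
  fun τ => (M.PR i ω {ω' | G.stratOpp i (M.strat ω') = τ}).toReal

/-- `(M,ω) ⊨ RAT_i`. -/
def RATi (M : PStruct G) (i : Fin n) (ω : M.Ω) : Prop :=
  G.BR i (M.strat ω i) (M.belief i ω)

/-- `(M,ω) ⊨ B_i E`. -/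
def Bel (M : PStruct G) (i : Fin n) (ω : M.Ω) (E : Set M.Ω) : Prop :=
  ∃ F, @MeasurableSet M.Ω M.meas F ∧ F ⊆ E ∧ M.PR i ω F = 1

/-- `(M,ω) ⊨ ⟨B_i⟩ E`. -/
def BelPos (M : PStruct G) (i : Fin n) (ω : M.Ω) (E : Set M.Ω) : Prop :=
  ∃ F, @MeasurableSet M.Ω M.meas F ∧ F ⊆ E ∧ 0 < M.PR i ω F

end PStruct

/-- The events `RATzero^k_i(M)`, defined simultaneously for all appropriate structures. -/
def RATzero {n : ℕ} (G : Game n) : (k : ℕ) → (M : PStruct G) → Fin n → Set M.Ω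
  | 0, _, _ => Set.univ
  | k + 1, M, i =>
      {ω | M.RATi i ω ∧
        M.Bel i ω {ω' | ∃ M' : PStruct G, ∃ ω'' : M'.Ω,
          M'.strat ω'' i = M.strat ω' i ∧ ω'' ∈ RATzero G k M' i} ∧
        M.Bel i ω {ω' | ∀ j, j ≠ i → ω' ∈ RATzero G k M j} ∧
        ∀ j, j ≠ i → ∀ s : G.S j,
          (∃ M' : PStruct G, ∃ ω' : M'.Ω, M'.strat ω' j = s ∧
              ∀ j', j' ≠ i → ω' ∈ RATzero G k M' j') →
            M.BelPos i ω {ω'' | M.strat ω'' j = s}}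

/-- The events `RAT^k_i(M)`. -/
def RATk {n : ℕ} (G : Game n) (M : PStruct G) : (k : ℕ) → Fin n → Set M.Ω
  | 0, _ => Set.univ
  | k + 1, i => {ω | M.RATi i ω ∧ M.Bel i ω {ω' | ∀ j, j ≠ i → ω' ∈ RATk G M k j}}

/-- The event that every player is rational. -/
def RATall {n : ℕ} {G : Game n} (M : PStruct G) : Set M.Ω := {ω | ∀ j, M.RATi j ω}

/-- The "everyone believes" operator iterated `k` times. -/
def Ek {n : ℕ} {G : Game n} (M : PStruct G) : ℕ → Set M.Ω → Set M.Ω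
  | 0, X => X
  | k + 1, X => {ω | ∀ j, M.Bel j ω (Ek M k X)}

/-- `σ` is a rationalizable strategy for player `i`. -/
def Rationalizable {n : ℕ} (G : Game n) (i : Fin n) (σ : G.S i) : Prop :=
  ∃ Z : (j : Fin n) → Set (G.S j),
    σ ∈ Z i ∧
    ∀ j, ∀ σ' ∈ Z j, ∃ μ : G.OppProf j → ℝ, IsDist μ ∧
      (∀ τ, 0 < μ τ → ∀ j', τ j' ∈ Z j'.val) ∧ G.BR j σ' μ

/-- `σ` is rationalizable′ for player `i`. -/
def Rationalizable' {n : ℕ} (G : Game n) (i : Fin n) (σ : G.S i) : Prop :=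
  ∃ X : ℕ → (j : Fin n) → Set (G.S j),
    (∀ j, X 0 j = Set.univ) ∧
    (∀ (k : ℕ) (j : Fin n), ∀ σ' ∈ X (k + 1) j, ∃ μ : G.OppProf j → ℝ, IsDist μ ∧
      (∀ τ, 0 < μ τ → ∀ j', τ j' ∈ X k j'.val) ∧ G.BR j σ' μ) ∧
    ∀ k, σ ∈ X k i

-- ===================== auxiliary development =====================
noncomputable section Aux
open MeasureTheory

private lemma helper_nonpos {a K : ℝ} (h : ∀ ε : ℝ, 0 < ε → a ≤ ε * K) : a ≤ 0 := by
  rcases le_or_gt K 0 with hK | hK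
  · have := h 1 one_pos; nlinarith
  · by_contra ha
    push_neg at ha
    have h2 := h (a / (2 * K)) (by positivity)
    have h3 : a / (2 * K) * K = a / 2 := by
      field_simp
    rw [h3] at h2
    linarith

namespace Game

variable {n : ℕ} (G : Game n)

lemma exists_br_of_not_sdom (i : Fin n) (s : G.S i) (T : Set (G.OppProf i))
    (h : ¬∃ m : G.S i → ℝ, IsDist m ∧ G.SDom i m s T) :
    ∃ μ : G.OppProf i → ℝ, IsDist μ ∧ (∀ τ, 0 < μ τ → τ ∈ T) ∧ G.BR i s μ := by
  classical
  let v : G.S i → (G.OppProf i → ℝ) :=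
    fun s' τ => G.u i (G.combine i s' τ) - G.u i (G.combine i s τ)
  let C : Set (G.OppProf i → ℝ) :=
    {x | ∃ w : G.S i → ℝ, IsDist w ∧ x = fun τ => ∑ s', w s' * v s' τ}
  let P : Set (G.OppProf i → ℝ) := {x | ∀ τ ∈ T, 0 < x τ}
  have hvC : ∀ s', v s' ∈ C := by
    intro s'
    refine ⟨fun s'' => if s'' = s' then 1 else 0, ⟨fun a => by positivity, by simp⟩, ?_⟩
    funext τ
    simp [Finset.sum_ite_eq']
  have hzeroC : (0 : G.OppProf i → ℝ) ∈ C := by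
    have := hvC s
    have hvs : v s = 0 := by funext τ; simp [v]
    rwa [hvs] at this
  have hCconv : Convex ℝ C := by
    rintro x ⟨w1, hw1, rfl⟩ y ⟨w2, hw2, rfl⟩ a b ha hb hab
    refine ⟨fun s' => a * w1 s' + b * w2 s',
      ⟨fun s' => add_nonneg (mul_nonneg ha (hw1.1 s')) (mul_nonneg hb (hw2.1 s')), ?_⟩, ?_⟩
    · rw [Finset.sum_add_distrib, ← Finset.mul_sum, ← Finset.mul_sum, hw1.2, hw2.2]
      simpa using hab
    · funext τ
      simp only [Pi.add_apply, Pi.smul_apply, smul_eq_mul, Finset.mul_sum]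
      rw [← Finset.sum_add_distrib]
      exact Finset.sum_congr rfl fun s' _ => by ring
  have hPconv : Convex ℝ P := by
    rintro x hx y hy a b ha hb hab τ hτ
    simp only [Pi.add_apply, Pi.smul_apply, smul_eq_mul]
    rcases eq_or_lt_of_le ha with rfl | ha'
    · have hb1 : b = 1 := by linarith
      have := hy τ hτ; nlinarith
    · have h1 : 0 < a * x τ := mul_pos ha' (hx τ hτ)
      have h2 : 0 ≤ b * y τ := mul_nonneg hb (hy τ hτ).le
      linarith
  have hPopen : IsOpen P := by
    have hP : P = ⋂ τ ∈ T, {x : G.OppProf i → ℝ | 0 < x τ} := by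
      ext x; simp [P, Set.mem_iInter]
    rw [hP]
    exact (Set.toFinite T).isOpen_biInter fun τ _ =>
      isOpen_lt continuous_const (continuous_apply τ)
  have hdisj : Disjoint P C := by
    rw [Set.disjoint_left]
    rintro x hxP ⟨w, hw, rfl⟩
    refine h ⟨w, hw, fun τ hτ => ?_⟩
    have hx : 0 < ∑ s', w s' * v s' τ := hxP τ hτ
    have key : ∑ s', w s' * v s' τ =
        G.EUmix i w τ - G.u i (G.combine i s τ) := by
      simp only [v, mul_sub]
      rw [Finset.sum_sub_distrib, ← Finset.sum_mul, hw.2, one_mul, EUmix]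
    rw [key] at hx
    linarith
  obtain ⟨f, u0, hfP, hfC⟩ := geometric_hahn_banach_open hPconv hPopen hCconv hdisj
  -- 1 is in P
  set one : G.OppProf i → ℝ := fun _ => 1 with hone_def
  have hone : one ∈ P := fun τ _ => one_pos
  -- f is nonpositive on P
  have hfnp : ∀ x ∈ P, f x ≤ 0 := by
    intro x hx
    by_contra hpos
    push_neg at hpos
    set t : ℝ := (|u0| + 1) / f x with ht
    have htpos : 0 < t := by positivity
    have hmem : t • x ∈ P := fun τ hτ => by
      simp only [Pi.smul_apply, smul_eq_mul]
      exact mul_pos htpos (hx τ hτ)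
    have := hfP _ hmem
    rw [_root_.map_smul, smul_eq_mul, ht, div_mul_cancel₀ _ (ne_of_gt hpos)] at this
    have : |u0| + 1 < u0 := this
    have h2 : u0 ≤ |u0| := le_abs_self u0
    linarith
  -- u0 nonneg
  have hu0 : 0 ≤ u0 := by
    by_contra hu
    push_neg at hu
    have hf1 : f one ≤ 0 := hfnp _ hone
    rcases eq_or_lt_of_le hf1 with heq | hlt
    · have h2 := hfP _ hone
      rw [heq] at h2
      linarith
    · set ε : ℝ := u0 / (2 * f one) with hε
      have hεpos : 0 < ε := div_pos_of_neg_of_neg hu (by linarith)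
      have hmem : ε • one ∈ P := fun τ hτ => by
        simp only [Pi.smul_apply, smul_eq_mul, hone_def, mul_one]; exact hεpos
      have h2 := hfP _ hmem
      rw [_root_.map_smul, smul_eq_mul] at h2
      have h4 : ε * (2 * f one) = u0 :=
        div_mul_cancel₀ _ (by nlinarith)
      nlinarith [mul_pos hεpos (neg_pos.mpr hlt)]
  -- coordinates of f
  set c : G.OppProf i → ℝ := fun τ => f (Pi.single τ (1:ℝ) : G.OppProf i → ℝ) with hc
  have hsingle : ∀ (τ : G.OppProf i) (r : ℝ),
      (Pi.single τ r : G.OppProf i → ℝ) = r • (Pi.single τ (1:ℝ) : G.OppProf i → ℝ) := by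
    intro τ r
    funext b
    by_cases hb : b = τ
    · subst hb; simp
    · simp [Pi.single_apply, hb]
  have hrepr : ∀ x : G.OppProf i → ℝ, f x = ∑ τ, x τ * c τ := by
    intro x
    conv_lhs => rw [← Finset.univ_sum_single x]
    rw [_root_.map_sum]
    exact Finset.sum_congr rfl fun τ _ => by rw [hsingle τ (x τ), _root_.map_smul, smul_eq_mul]
  -- key scaling bound
  have hcoord : ∀ (τ : G.OppProf i) (r : ℝ), (τ ∈ T → 0 ≤ r) → r * c τ ≤ 0 := by
    intro τ r hr
    apply helper_nonpos (K := -(f one))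
    intro ε hε
    have hmem : ((Pi.single τ r : G.OppProf i → ℝ) + ε • one) ∈ P := by
      intro τ' hτ'
      simp only [Pi.add_apply, Pi.smul_apply, smul_eq_mul, hone_def, mul_one]
      by_cases hττ : τ' = τ
      · subst hττ
        have := hr hτ'
        simp only [Pi.single_eq_same]
        linarith
      · rw [Pi.single_eq_of_ne hττ]
        linarith
    have hle := hfnp _ hmem
    rw [_root_.map_add, _root_.map_smul, smul_eq_mul, hsingle τ r, _root_.map_smul, smul_eq_mul] at hle
    linarith
  have hcnp : ∀ τ, c τ ≤ 0 := by
    intro τ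
    by_cases hτ : τ ∈ T
    · have := hcoord τ 1 (fun _ => zero_le_one)
      linarith
    · have := hcoord τ 1 (fun hmem => absurd hmem hτ)
      linarith
  have hcT : ∀ τ, τ ∉ T → c τ = 0 := by
    intro τ hτ
    have h1 := hcoord τ 1 (fun hmem => absurd hmem hτ)
    have h2 := hcoord τ (-1) (fun hmem => absurd hmem hτ)
    linarith
  -- c is nonzero
  have hcne : ∃ τ, c τ < 0 := by
    by_contra hall
    push_neg at hall
    have hc0 : ∀ τ, c τ = 0 := fun τ => le_antisymm (hcnp τ) (hall τ)
    have hf0 : ∀ x, f x = 0 := by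
      intro x; rw [hrepr]; simp [hc0]
    have h1 := hfP _ hone
    have h2 := hfC _ hzeroC
    rw [hf0] at h1
    rw [hf0] at h2
    linarith
  obtain ⟨τ0, hτ0⟩ := hcne
  set Ssum : ℝ := ∑ τ, c τ with hS
  have hSneg : Ssum < 0 := by
    have : Ssum < ∑ τ : G.OppProf i, (0:ℝ) :=
      Finset.sum_lt_sum (fun τ _ => hcnp τ) ⟨τ0, Finset.mem_univ _, hτ0⟩
    simpa using this
  refine ⟨fun τ => c τ / Ssum, ⟨fun τ => ?_, ?_⟩, fun τ hτ => ?_, fun s' => ?_⟩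
  · rw [div_nonneg_iff]
    right
    exact ⟨hcnp τ, hSneg.le⟩
  · rw [← Finset.sum_div, ← hS, div_self (ne_of_lt hSneg)]
  · by_contra hmem
    have hpos : 0 < c τ / Ssum := hτ
    rw [hcT τ hmem] at hpos
    simp at hpos
  · have hfv : 0 ≤ f (v s') := le_trans hu0 (hfC _ (hvC s'))
    rw [hrepr] at hfv
    have key : G.EU i s' (fun τ => c τ / Ssum) - G.EU i s (fun τ => c τ / Ssum) =
        (∑ τ, v s' τ * c τ) / Ssum := by
      rw [EU, EU, ← Finset.sum_sub_distrib, Finset.sum_div]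
      exact Finset.sum_congr rfl fun τ _ => by
        simp only [v]; field_simp
    have : (∑ τ, v s' τ * c τ) / Ssum ≤ 0 :=
      div_nonpos_of_nonneg_of_nonpos hfv hSneg.le
    linarith


lemma not_sdom_of_br (i : Fin n) (s : G.S i) (T : Set (G.OppProf i))
    (μ : G.OppProf i → ℝ) (hμ : IsDist μ) (hsupp : ∀ τ, 0 < μ τ → τ ∈ T)
    (hbr : G.BR i s μ) : ¬∃ m : G.S i → ℝ, IsDist m ∧ G.SDom i m s T := by
  rintro ⟨m, hm, hdom⟩
  have hex : ∃ τ : G.OppProf i, 0 < μ τ := by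
    by_contra hall
    push_neg at hall
    have hle : (∑ τ, μ τ) ≤ 0 := Finset.sum_nonpos (fun τ _ => hall τ)
    rw [hμ.2] at hle; linarith
  obtain ⟨τ1, hτ1⟩ := hex
  have h1 : G.EU i s μ < ∑ τ, μ τ * G.EUmix i m τ := by
    rw [Game.EU]
    apply Finset.sum_lt_sum
    · intro τ _
      rcases eq_or_lt_of_le (hμ.1 τ) with heq | hpos
      · rw [← heq]; simp
      · exact mul_le_mul_of_nonneg_left (hdom τ (hsupp τ hpos)).le (hμ.1 τ)
    · exact ⟨τ1, Finset.mem_univ _, mul_lt_mul_of_pos_left (hdom τ1 (hsupp τ1 hτ1)) hτ1⟩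
  have h2 : ∑ τ, μ τ * G.EUmix i m τ = ∑ s', m s' * G.EU i s' μ := by
    simp only [Game.EUmix, Game.EU, Finset.mul_sum]
    rw [Finset.sum_comm]
    exact Finset.sum_congr rfl fun s' _ => Finset.sum_congr rfl fun τ _ => by ring
  have h3 : ∑ s', m s' * G.EU i s' μ ≤ ∑ s' : G.S i, m s' * G.EU i s μ :=
    Finset.sum_le_sum fun s' _ => mul_le_mul_of_nonneg_left (hbr s') (hm.1 s')
  have h4 : ∑ s' : G.S i, m s' * G.EU i s μ = G.EU i s μ := by
    rw [← Finset.sum_mul, hm.2, one_mul]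
  linarith

end Game

namespace PStruct

variable {n : ℕ} {G : Game n}

lemma measurableSet_opp (M : PStruct G) (i : Fin n) (τ : G.OppProf i) :
    @MeasurableSet M.Ω M.meas {ω' | G.stratOpp i (M.strat ω') = τ} := by
  have heq : {ω' | G.stratOpp i (M.strat ω') = τ} =
      ⋂ j : {j : Fin n // j ≠ i}, {ω' | M.strat ω' j.val = τ j} := by
    ext ω'
    simp only [Set.mem_setOf_eq, Set.mem_iInter]
    constructor
    · intro hh j; rw [← hh]; rfl
    · intro hh; funext j; exact hh j
  rw [heq]
  exact MeasurableSet.iInter fun j => M.strat_meas j.val (τ j)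

lemma belief_isDist (M : PStruct G) (i : Fin n) (ω : M.Ω) : IsDist (M.belief i ω) := by
  haveI := M.PR_prob i ω
  refine ⟨fun τ => ENNReal.toReal_nonneg, ?_⟩
  have hdisj : Pairwise (Function.onFun Disjoint
      (fun τ : G.OppProf i => {ω' | G.stratOpp i (M.strat ω') = τ})) := by
    intro τ1 τ2 hne
    simp only [Function.onFun]
    apply Set.disjoint_left.mpr
    intro ω' h1 h2
    have e1 : G.stratOpp i (M.strat ω') = τ1 := h1
    have e2 : G.stratOpp i (M.strat ω') = τ2 := h2
    exact hne (e1.symm.trans e2)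
  have huniv : (⋃ τ : G.OppProf i, {ω' | G.stratOpp i (M.strat ω') = τ}) = Set.univ := by
    ext ω'
    simp only [Set.mem_iUnion, Set.mem_univ, iff_true]
    exact ⟨_, rfl⟩
  have hsum := measure_iUnion (μ := M.PR i ω) hdisj (fun τ => M.measurableSet_opp i τ)
  rw [huniv, tsum_fintype, measure_univ] at hsum
  have htr := ENNReal.toReal_sum (s := Finset.univ)
    (f := fun τ : G.OppProf i => M.PR i ω {ω' | G.stratOpp i (M.strat ω') = τ})
    (fun τ _ => measure_ne_top _ _)
  calc ∑ τ : G.OppProf i, M.belief i ω τ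
      = (∑ τ : G.OppProf i,
          M.PR i ω {ω' | G.stratOpp i (M.strat ω') = τ}).toReal := htr.symm
    _ = 1 := by rw [← hsum]; rfl

lemma exists_state_of_belief_pos (M : PStruct G) (i : Fin n) (ω : M.Ω)
    {F : Set M.Ω} (hFm : @MeasurableSet M.Ω M.meas F) (hF1 : M.PR i ω F = 1)
    {τ : G.OppProf i} (hpos : 0 < M.belief i ω τ) :
    ∃ ω', ω' ∈ F ∧ G.stratOpp i (M.strat ω') = τ := by
  haveI := M.PR_prob i ω
  by_contra hnone
  push_neg at hnone
  have hsub : {ω' | G.stratOpp i (M.strat ω') = τ} ⊆ Fᶜ := by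
    intro ω' hω' hF
    exact hnone ω' hF hω'
  have hFc : M.PR i ω Fᶜ = 0 := by
    rw [measure_compl hFm (measure_ne_top _ _), measure_univ, hF1, tsub_self]
  have hz : M.PR i ω {ω' | G.stratOpp i (M.strat ω') = τ} = 0 :=
    le_antisymm (hFc ▸ measure_mono hsub) zero_le
  have : M.belief i ω τ = 0 := by
    simp only [PStruct.belief, hz, ENNReal.toReal_zero]
  rw [this] at hpos
  exact lt_irrefl _ hpos

end PStruct

lemma RATk_succ_subset {n : ℕ} (G : Game n) (M : PStruct G) :
    ∀ (k : ℕ) (i : Fin n), RATk G M (k + 1) i ⊆ RATk G M k i := by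
  intro k
  induction k with
  | zero => intro i ω _; trivial
  | succ k ih =>
    rintro i ω ⟨hrat, F, hFm, hFsub, hF1⟩
    exact ⟨hrat, F, hFm, fun ω' hω' j hj => ih j (hFsub hω' j hj), hF1⟩

lemma strat_mem_NSD_of_RATk {n : ℕ} (G : Game n) :
    ∀ (k : ℕ) (i : Fin n) (M : PStruct G) (ω : M.Ω),
      ω ∈ RATk G M k i → M.strat ω i ∈ Game.NSD G k i := by
  intro k
  induction k with
  | zero => intro i M ω _; trivial
  | succ k ih =>
    rintro i M ω ⟨hrat, F, hFm, hFsub, hF1⟩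
    refine ⟨ih i M ω (RATk_succ_subset G M k i ⟨hrat, F, hFm, hFsub, hF1⟩), ?_⟩
    apply G.not_sdom_of_br i _ _ (M.belief i ω) (M.belief_isDist i ω) ?_ hrat
    intro τ hpos
    obtain ⟨ω', hω'F, hω'τ⟩ := M.exists_state_of_belief_pos i ω hFm hF1 hpos
    intro j'
    have hR : ω' ∈ RATk G M k j'.val := hFsub hω'F j'.val j'.prop
    have hN := ih j'.val M ω' hR
    rw [← hω'τ]
    exact hN

-- ===================== the canonical finite construction =====================

namespace Cst

variable {n : ℕ} (G : Game n)

noncomputable def brB (j : Fin n) (m : ℕ) (s : G.S j) : G.OppProf j → ℝ :=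
  @dite _ (s ∈ Game.NSD G (m + 1) j) (Classical.propDecidable _)
    (fun h => Classical.choose (G.exists_br_of_not_sdom j s
      {τ : G.OppProf j | ∀ j', τ j' ∈ Game.NSD G m j'.val} h.2))
    (fun _ => fun _ => 0)

lemma brB_spec (j : Fin n) (m : ℕ) (s : G.S j) (h : s ∈ Game.NSD G (m + 1) j) :
    IsDist (brB G j m s) ∧ (∀ τ, 0 < brB G j m s τ → ∀ j', τ j' ∈ Game.NSD G m j'.val) ∧
      G.BR j s (brB G j m s) := by
  rw [brB, dif_pos h]
  exact Classical.choose_spec (G.exists_br_of_not_sdom j s _ h.2)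

variable (k : ℕ)

abbrev Om : Type := ∀ j : Fin n, G.S j × Fin (k + 1)

def cstrat (ω : Om G k) : G.Prof := fun j => (ω j).1

def stOf (j : Fin n) (s : G.S j) (mf : Fin (k + 1)) (τ : G.OppProf j) : Om G k :=
  fun j' => (G.combine j s τ j', if j' = j then mf else ⟨mf.val - 1, by omega⟩)

lemma combine_self (j : Fin n) (s : G.S j) (τ : G.OppProf j) :
    G.combine j s τ j = s := by
  simp [Game.combine]

lemma combine_ne (j : Fin n) (s : G.S j) (τ : G.OppProf j) (j' : Fin n) (h : j' ≠ j) :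
    G.combine j s τ j' = τ ⟨j', h⟩ := by
  simp [Game.combine, h]

lemma stratOpp_combine (j : Fin n) (s : G.S j) (τ : G.OppProf j) :
    G.stratOpp j (G.combine j s τ) = τ := by
  funext j'
  exact combine_ne G j s τ j'.val j'.prop

lemma stOf_self (j : Fin n) (s : G.S j) (mf : Fin (k + 1)) (τ : G.OppProf j) :
    stOf G k j s mf τ j = (s, mf) := by
  rw [stOf]
  simp [combine_self]

lemma cstrat_stOf (j : Fin n) (s : G.S j) (mf : Fin (k + 1)) (τ : G.OppProf j) :
    cstrat G k (stOf G k j s mf τ) = G.combine j s τ := rfl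

open MeasureTheory in
noncomputable def typeMeas (j : Fin n) (p : G.S j × Fin (k + 1)) :
    @Measure (Om G k) ⊤ :=
  ∑ τ : G.OppProf j, ENNReal.ofReal (brB G j (p.2.val - 1) p.1 τ) •
    @Measure.dirac (Om G k) ⊤ (stOf G k j p.1 p.2 τ)

def good (j : Fin n) (p : G.S j × Fin (k + 1)) : Prop :=
  0 < p.2.val ∧ p.1 ∈ Game.NSD G p.2.val j

open MeasureTheory in
noncomputable def theMeas (j : Fin n) (ω : Om G k) : @Measure (Om G k) ⊤ :=
  @ite _ (good G k j (ω j)) (Classical.propDecidable _)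
    (typeMeas G k j (ω j)) (@Measure.dirac (Om G k) ⊤ ω)

open MeasureTheory in
lemma typeMeas_apply (j : Fin n) (p : G.S j × Fin (k + 1)) (E : Set (Om G k)) :
    typeMeas G k j p E =
      ∑ τ : G.OppProf j, ENNReal.ofReal (brB G j (p.2.val - 1) p.1 τ) *
        E.indicator 1 (stOf G k j p.1 p.2 τ) := by
  rw [typeMeas, Measure.finset_sum_apply]
  refine Finset.sum_congr rfl fun τ _ => ?_
  rw [Measure.smul_apply, @Measure.dirac_apply' _ ⊤ _ _ trivial, smul_eq_mul]

lemma typeMeas_eq_one (j : Fin n) (p : G.S j × Fin (k + 1))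
    (hd : IsDist (brB G j (p.2.val - 1) p.1)) (E : Set (Om G k))
    (hE : ∀ τ, 0 < brB G j (p.2.val - 1) p.1 τ → stOf G k j p.1 p.2 τ ∈ E) :
    typeMeas G k j p E = 1 := by
  rw [typeMeas_apply]
  have hcongr : ∀ τ ∈ Finset.univ,
      ENNReal.ofReal (brB G j (p.2.val - 1) p.1 τ) *
        E.indicator 1 (stOf G k j p.1 p.2 τ) =
      ENNReal.ofReal (brB G j (p.2.val - 1) p.1 τ) := by
    intro τ _
    rcases lt_or_ge 0 (brB G j (p.2.val - 1) p.1 τ) with hpos | hle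
    · rw [Set.indicator_of_mem (hE τ hpos), Pi.one_apply, mul_one]
    · rw [ENNReal.ofReal_of_nonpos hle, zero_mul]
  rw [Finset.sum_congr rfl hcongr,
    ← ENNReal.ofReal_sum_of_nonneg (fun τ _ => hd.1 τ), hd.2, ENNReal.ofReal_one]

lemma good_imp_dist (j : Fin n) (p : G.S j × Fin (k + 1)) (h : good G k j p) :
    IsDist (brB G j (p.2.val - 1) p.1) ∧
      (∀ τ, 0 < brB G j (p.2.val - 1) p.1 τ →
        ∀ j', τ j' ∈ Game.NSD G (p.2.val - 1) j'.val) ∧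
      G.BR j p.1 (brB G j (p.2.val - 1) p.1) := by
  have hmem : p.1 ∈ Game.NSD G ((p.2.val - 1) + 1) j := by
    have : (p.2.val - 1) + 1 = p.2.val := Nat.succ_pred_eq_of_pos h.1
    rw [this]
    exact h.2
  exact brB_spec G j (p.2.val - 1) p.1 hmem

open MeasureTheory in
noncomputable def M : PStruct G where
  Ω := Om G k
  meas := ⊤
  strat := cstrat G k
  PR := theMeas G k
  PR_prob := by
    intro j ω
    constructor
    simp only [theMeas]
    split_ifs with h
    · exact typeMeas_eq_one G k j (ω j) (good_imp_dist G k j (ω j) h).1 _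
        (fun τ _ => trivial)
    · simp
  strat_meas := fun _ _ => trivial
  PR_own_strat := by
    intro j ω
    simp only [theMeas]
    split_ifs with h
    · apply typeMeas_eq_one G k j (ω j) (good_imp_dist G k j (ω j) h).1
      intro τ _
      show cstrat G k (stOf G k j (ω j).1 (ω j).2 τ) j = cstrat G k ω j
      rw [cstrat_stOf, combine_self]
      rfl
    · rw [@Measure.dirac_apply' _ ⊤ _ _ trivial]
      simp [Set.indicator_apply]
  PR_meas := fun _ _ => trivial
  PR_own_PR := by
    intro j ω
    set Eset : Set (Om G k) := {ω' | theMeas G k j ω' = theMeas G k j ω} with hE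
    by_cases h : good G k j (ω j)
    · have hPR : theMeas G k j ω = typeMeas G k j (ω j) := if_pos h
      rw [hPR]
      apply typeMeas_eq_one G k j (ω j) (good_imp_dist G k j (ω j) h).1
      intro τ _
      show theMeas G k j (stOf G k j (ω j).1 (ω j).2 τ) = theMeas G k j ω
      have hst : stOf G k j (ω j).1 (ω j).2 τ j = ω j := by rw [stOf_self]
      have hgood2 : good G k j ((stOf G k j (ω j).1 (ω j).2 τ) j) := by
        rw [hst]; exact h
      have hPR2 : theMeas G k j (stOf G k j (ω j).1 (ω j).2 τ) =
          typeMeas G k j ((stOf G k j (ω j).1 (ω j).2 τ) j) := if_pos hgood2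
      rw [hPR2, hPR, hst]
    · have hdd : theMeas G k j ω = @Measure.dirac (Om G k) ⊤ ω := if_neg h
      rw [hdd, @Measure.dirac_apply' _ ⊤ _ _ trivial]
      have hmem : ω ∈ Eset := by rw [hE]; exact rfl
      rw [Set.indicator_of_mem hmem, Pi.one_apply]

lemma key : ∀ (m : ℕ) (ω : Om G k) (j : Fin n),
    (ω j).2.val = m → (ω j).1 ∈ Game.NSD G m j → ω ∈ RATk G (M G k) m j := by
  intro m
  induction m with
  | zero => intro ω j _ _; trivial
  | succ m ih =>
    intro ω j hlev hmem
    have hgood : good G k j (ω j) := ⟨by omega, by rw [hlev]; exact hmem⟩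
    have hPR : theMeas G k j ω = typeMeas G k j (ω j) := if_pos hgood
    have hm1 : (ω j).2.val - 1 = m := by omega
    obtain ⟨hdist, hsupp, hbr⟩ := good_imp_dist G k j (ω j) hgood
    rw [hm1] at hdist hsupp hbr
    have hbel : (M G k).belief j ω = brB G j m (ω j).1 := by
      funext τ
      show ((theMeas G k j ω) {ω' : Om G k | G.stratOpp j (cstrat G k ω') = τ}).toReal = _
      rw [hPR, typeMeas_apply, hm1]
      have hcond : ∀ τ' : G.OppProf j,
          (stOf G k j (ω j).1 (ω j).2 τ' ∈
            {ω' : Om G k | G.stratOpp j (cstrat G k ω') = τ}) ↔ τ' = τ := by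
        intro τ'
        show G.stratOpp j (cstrat G k (stOf G k j (ω j).1 (ω j).2 τ')) = τ ↔ τ' = τ
        rw [cstrat_stOf, stratOpp_combine]
      have hsum : ∑ τ' : G.OppProf j, ENNReal.ofReal (brB G j m (ω j).1 τ') *
          Set.indicator {ω' : Om G k | G.stratOpp j (cstrat G k ω') = τ} 1
            (stOf G k j (ω j).1 (ω j).2 τ') =
          ENNReal.ofReal (brB G j m (ω j).1 τ) := by
        rw [Finset.sum_eq_single τ]
        · rw [Set.indicator_of_mem ((hcond τ).mpr rfl), Pi.one_apply, mul_one]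
        · intro τ' _ hne
          rw [Set.indicator_of_notMem (fun hc => hne ((hcond τ').mp hc)), mul_zero]
        · intro habs; exact absurd (Finset.mem_univ τ) habs
      rw [hsum, ENNReal.toReal_ofReal (hdist.1 τ)]
    refine ⟨?_, ?_⟩
    · show G.BR j ((M G k).strat ω j) ((M G k).belief j ω)
      rw [hbel]
      exact hbr
    · refine ⟨{ω' | ∀ j' : Fin n, j' ≠ j →
        ((ω' j').2.val = m ∧ (ω' j').1 ∈ Game.NSD G m j')}, trivial, ?_, ?_⟩
      · intro ω' hω' j' hj'
        exact ih ω' j' (hω' j' hj').1 (hω' j' hj').2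
      · show (theMeas G k j ω) {ω' : Om G k | ∀ j' : Fin n, j' ≠ j →
            ((ω' j').2.val = m ∧ (ω' j').1 ∈ Game.NSD G m j')} = 1
        rw [hPR]
        have hd' : IsDist (brB G j ((ω j).2.val - 1) (ω j).1) := by rw [hm1]; exact hdist
        apply typeMeas_eq_one G k j (ω j) hd'
        intro τ hpos
        rw [hm1] at hpos
        intro j' hj'
        constructor
        · show (if j' = j then (ω j).2 else
            (⟨(ω j).2.val - 1, by omega⟩ : Fin (k + 1))).val = m
          rw [if_neg hj']
          exact hm1
        · show G.combine j (ω j).1 τ j' ∈ Game.NSD G m j'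
          rw [combine_ne G j (ω j).1 τ j' hj']
          exact hsupp τ hpos ⟨j', hj'⟩

end Cst

end Aux

end
/-- characterization of `k` rounds of iterated deletion of strongly dominated
strategies via `RAT^k_i`; moreover the structure can be taken finite with every subset
measurable. -/
theorem iterated_strict_dominance_characterization {n : ℕ} (G : Game n) (k : ℕ) (i : Fin n)
    (σ : G.S i) :
    (σ ∈ Game.NSD G k i ↔
      ∃ (M : PStruct G) (ω : M.Ω), M.strat ω i = σ ∧ ω ∈ RATk G M k i) ∧
    (σ ∈ Game.NSD G k i →
      ∃ (M : PStruct G) (ω : M.Ω), Finite M.Ω ∧ M.meas = ⊤ ∧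
        M.strat ω i = σ ∧ ω ∈ RATk G M k i) := by
  classical
  have hfwd : σ ∈ Game.NSD G k i →
      ∃ (M : PStruct G) (ω : M.Ω), Finite M.Ω ∧ M.meas = ⊤ ∧
        M.strat ω i = σ ∧ ω ∈ RATk G M k i := by
    intro hσ
    refine ⟨Cst.M G k, Function.update
      (fun j => (Classical.arbitrary (G.S j), (0 : Fin (k + 1)))) i (σ, Fin.last k),
      ?_, rfl, ?_, ?_⟩
    · exact inferInstanceAs (Finite (Cst.Om G k))
    · show (Function.update (fun j => (Classical.arbitrary (G.S j), (0 : Fin (k + 1))))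
        i (σ, Fin.last k) i).1 = σ
      rw [Function.update_self]
    · apply Cst.key G k k
      · rw [Function.update_self]
        rfl
      · rw [Function.update_self]
        exact hσ
  refine ⟨⟨fun hσ => ?_, fun ⟨M, ω, h1, h2⟩ => ?_⟩, hfwd⟩
  · obtain ⟨M, ω, _, _, h3, h4⟩ := hfwd hσ
    exact ⟨M, ω, h3, h4⟩
  · rw [← h1]
    exact strat_mem_NSD_of_RATk G k i M ω h2
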